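/- arXiv:1108.0477 — 2 statements merged into one kernel-verified Lean document; each statement's English description precedes it below -/
import Mathlib

section
/- For every τ ≥ 0, the soft-thresholding risk tends to 1 + τ² as the signal amplitude grows: lim_{μ → ∞} r(μ, τ) = 1 + τ². -/
open MeasureTheory Filter

/-- Complex soft thresholding: `η(x;τ) = (1 - τ/|x|)·x` if `|x| > τ`, else `0`. -/
noncomputable def softThresh (x : ℂ) (τ : ℝ) : ℂ :=
  if τ < ‖x‖ then ((1 - τ / ‖x‖ : ℝ) : ℂ) * x else 0

/-- Risk of complex soft thresholding at amplitude `μ`: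
`r(μ,τ) = ∫_{ℝ²} |η(μ + z₁ + i z₂; τ) − μ|² (1/π) e^{−(z₁²+z₂²)} dz₁ dz₂`. -/
noncomputable def softRisk (μ τ : ℝ) : ℝ :=
  ∫ z : ℝ × ℝ,
    ‖softThresh ((μ : ℂ) + (z.1 : ℂ) + Complex.I * (z.2 : ℂ)) τ - (μ : ℂ)‖ ^ 2 *
      ((1 / Real.pi) * Real.exp (-(z.1 ^ 2 + z.2 ^ 2)))

/-! ### Auxiliary 1D integral facts -/

private lemma aux_int_sq : Integrable (fun x : ℝ => x^2 * Real.exp (-x^2)) := by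
  have h := integrable_rpow_mul_exp_neg_mul_sq (b := 1) one_pos (s := 2) (by norm_num)
  refine h.congr (Eventually.of_forall fun x => by
    norm_num [show (2:ℝ) = ((2:ℕ):ℝ) by norm_num, Real.rpow_natCast])

private lemma aux_int_g : Integrable (fun x : ℝ => Real.exp (-x^2)) :=
  (integrable_exp_neg_mul_sq (b := 1) one_pos).congr
    (Eventually.of_forall fun x => by norm_num)

private lemma aux_int_x : Integrable (fun x : ℝ => x * Real.exp (-x^2)) :=
  (integrable_mul_exp_neg_mul_sq (b := 1) one_pos).congr
    (Eventually.of_forall fun x => by norm_num)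

private lemma aux_gauss_val : ∫ x : ℝ, Real.exp (-x^2) = Real.sqrt Real.pi := by
  have := integral_gaussian 1
  simpa using this

private lemma aux_odd_val : ∫ x : ℝ, x * Real.exp (-x^2) = 0 := by
  have h := integral_neg_eq_self (fun x : ℝ => x * Real.exp (-x^2)) volume
  simp only [neg_sq, neg_mul] at h
  rw [integral_neg] at h
  linarith

private lemma aux_tendsto_xexp :
    Tendsto (fun x : ℝ => x * Real.exp (-x^2)) atTop (nhds 0) := by
  have h := rpow_mul_exp_neg_mul_sq_isLittleO_exp_neg (b := 1) one_pos 1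
  have h2 : Tendsto (fun x : ℝ => Real.exp (-(1/2) * x)) atTop (nhds 0) := by
    apply Real.tendsto_exp_atBot.comp
    exact (tendsto_const_mul_atBot_of_neg (by norm_num)).mpr tendsto_id
  have h3 := h.isBigO.trans_tendsto h2
  refine h3.congr' ?_
  filter_upwards [eventually_ge_atTop (0:ℝ)] with x hx
  rw [Real.rpow_one, neg_one_mul]

private lemma aux_sq_val : ∫ x : ℝ, x^2 * Real.exp (-x^2) = Real.sqrt Real.pi / 2 := by
  have key : ∫ x in Set.Ioi (0:ℝ), (x^2 * Real.exp (-x^2) - (1/2) * Real.exp (-x^2))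
      = 0 - (-(0/2) * Real.exp (-(0:ℝ)^2)) := by
    apply integral_Ioi_of_hasDerivAt_of_tendsto' (f := fun x => -(x/2) * Real.exp (-x^2))
    · intro x _
      have h1 : HasDerivAt (fun x : ℝ => -(x/2)) (-(1/2)) x := by
        exact (((hasDerivAt_id x).div_const 2).neg).congr_deriv (by norm_num)
      have h2 : HasDerivAt (fun x : ℝ => Real.exp (-x^2)) (Real.exp (-x^2) * (-(2*x))) x := by
        have : HasDerivAt (fun x : ℝ => -x^2) (-(2*x)) x := by
          exact ((hasDerivAt_pow 2 x)).neg.congr_deriv (by norm_num)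
        exact (Real.hasDerivAt_exp _).comp x this
      have := h1.mul h2
      exact this.congr_deriv (by ring)
    · exact (aux_int_sq.sub (aux_int_g.const_mul (1/2))).integrableOn
    · have := aux_tendsto_xexp.const_mul (-(1/2) : ℝ)
      rw [mul_zero] at this
      refine this.congr fun x => by ring
  have hsplit : ∫ x in Set.Ioi (0:ℝ), (x^2 * Real.exp (-x^2) - (1/2) * Real.exp (-x^2))
      = (∫ x in Set.Ioi (0:ℝ), x^2 * Real.exp (-x^2))
        - ∫ x in Set.Ioi (0:ℝ), (1/2) * Real.exp (-x^2) :=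
    integral_sub aux_int_sq.integrableOn (aux_int_g.const_mul _).integrableOn
  have hg : ∫ x in Set.Ioi (0:ℝ), Real.exp (-x^2) = Real.sqrt Real.pi / 2 := by
    have := integral_gaussian_Ioi 1
    simpa using this
  have hIoi : ∫ x in Set.Ioi (0:ℝ), x^2 * Real.exp (-x^2) = Real.sqrt Real.pi / 4 := by
    rw [hsplit] at key
    rw [integral_const_mul, hg] at key
    simp at key
    linarith
  have := integral_comp_abs (f := fun t : ℝ => t^2 * Real.exp (-t^2))
  simp only [sq_abs] at this
  rw [this, hIoi]
  ring

/-! ### 2D product integrals -/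

private lemma aux_int2d {f g : ℝ → ℝ} (hf : Integrable f) (hg : Integrable g) :
    Integrable (fun z : ℝ × ℝ => f z.1 * g z.2) := by
  rw [Measure.volume_eq_prod]; exact hf.mul_prod hg

private lemma aux_int2d_val (f g : ℝ → ℝ) :
    ∫ z : ℝ × ℝ, f z.1 * g z.2 = (∫ x, f x) * ∫ y, g y := by
  rw [Measure.volume_eq_prod]; exact integral_prod_mul f g

/-! ### Soft-thresholding facts -/

private lemma measurable_softThresh (τ : ℝ) : Measurable (fun x : ℂ => softThresh x τ) := by
  unfold softThresh
  apply Measurable.ite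
  · exact measurableSet_lt measurable_const continuous_norm.measurable
  · have h1 : Measurable fun x : ℂ => (1 - τ / ‖x‖ : ℝ) := by
      simp only [div_eq_mul_inv]
      exact measurable_const.sub
        (measurable_const.mul continuous_norm.measurable.inv)
    exact (Complex.measurable_ofReal.comp h1).mul measurable_id
  · exact measurable_const

private lemma aux_tendsto_unit (c : ℂ) :
    Tendsto (fun μ : ℝ => ((μ : ℂ) + c) / ((‖(μ : ℂ) + c‖ : ℝ) : ℂ))
      atTop (nhds 1) := by
  have hc : Tendsto (fun μ : ℝ => 1 + c * ((μ : ℂ))⁻¹) atTop (nhds (1 : ℂ)) := by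
    have h0 : Tendsto (fun μ : ℝ => ((μ : ℂ))⁻¹) atTop (nhds 0) := by
      have h := tendsto_inv_atTop_zero (𝕜 := ℝ)
      have h2 := (Complex.continuous_ofReal.tendsto 0).comp h
      refine h2.congr fun x => ?_
      simp [Function.comp, Complex.ofReal_inv]
    have := tendsto_const_nhds (x := (1:ℂ)) (f := atTop (α := ℝ)) |>.add
      ((tendsto_const_nhds (x := c)).mul h0)
    simpa using this
  have hcont : ContinuousAt (fun w : ℂ => w / ((‖w‖ : ℝ) : ℂ)) 1 := by
    apply ContinuousAt.div continuousAt_id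
    · exact (Complex.continuous_ofReal.comp continuous_norm).continuousAt
    · simp
  have hmain := (hcont.tendsto.comp hc)
  simp only [Function.comp_def] at hmain
  norm_num at hmain
  refine hmain.congr' ?_
  filter_upwards [eventually_gt_atTop (0:ℝ), eventually_gt_atTop (‖c‖)] with μ hμ hμc
  have hμ0 : (μ : ℂ) ≠ 0 := by exact_mod_cast ne_of_gt hμ
  have hfact : (μ : ℂ) + c = (μ : ℂ) * (1 + c * (μ : ℂ)⁻¹) := by
    field_simp
  have habs : ‖(μ : ℂ) + c‖ = μ * ‖1 + c * (μ : ℂ)⁻¹‖ := by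
    rw [hfact, norm_mul, Complex.norm_real, Real.norm_eq_abs, abs_of_pos hμ]
  rw [habs, hfact]
  push_cast
  rw [mul_div_mul_left _ _ hμ0]

private lemma softThresh_sub_eq (τ : ℝ) (hτ : 0 ≤ τ) (c : ℂ) (μ : ℝ)
    (h : τ < ‖(μ:ℂ) + c‖) :
    softThresh ((μ:ℂ) + c) τ - (μ:ℂ)
      = c - (τ:ℂ) * (((μ:ℂ) + c) / ((‖(μ:ℂ) + c‖ : ℝ) : ℂ)) := by
  set x : ℂ := (μ:ℂ) + c with hx
  have hxne : (‖x‖ : ℂ) ≠ 0 := by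
    simp only [ne_eq, Complex.ofReal_eq_zero]
    exact ne_of_gt (lt_of_le_of_lt hτ h)
  rw [softThresh, if_pos h]
  push_cast
  field_simp
  ring

private lemma tendsto_pointwise (τ : ℝ) (hτ : 0 ≤ τ) (c : ℂ) :
    Tendsto (fun μ : ℝ => ‖softThresh ((μ:ℂ) + c) τ - (μ:ℂ)‖ ^ 2)
      atTop (nhds (‖c - (τ:ℂ)‖ ^ 2)) := by
  have habs : ∀ᶠ μ : ℝ in atTop, τ < ‖(μ:ℂ) + c‖ := by
    filter_upwards [eventually_gt_atTop (τ + ‖c‖)] with μ hμ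
    have h1 : ‖(μ:ℂ)‖ ≤ ‖(μ:ℂ) + c‖ + ‖c‖ := by
      calc ‖(μ:ℂ)‖ = ‖((μ:ℂ) + c) + (-c)‖ := by ring_nf
      _ ≤ ‖(μ:ℂ) + c‖ + ‖-c‖ := norm_add_le _ _
      _ = ‖(μ:ℂ) + c‖ + ‖c‖ := by rw [norm_neg]
    have h2 : (0:ℝ) < μ := lt_of_le_of_lt (by positivity) hμ
    rw [Complex.norm_real, Real.norm_eq_abs, abs_of_pos h2] at h1
    linarith
  have hlim : Tendsto
      (fun μ : ℝ => c - (τ:ℂ) * (((μ:ℂ) + c) / ((‖(μ:ℂ) + c‖ : ℝ) : ℂ)))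
      atTop (nhds (c - (τ:ℂ))) := by
    have := (tendsto_const_nhds (x := c) (f := atTop (α := ℝ))).sub
      ((tendsto_const_nhds (x := (τ:ℂ))).mul (aux_tendsto_unit c))
    simpa using this
  have hcomp : Tendsto (fun μ : ℝ => softThresh ((μ:ℂ) + c) τ - (μ:ℂ)) atTop
      (nhds (c - (τ:ℂ))) := by
    refine hlim.congr' ?_
    filter_upwards [habs] with μ hμ
    exact (softThresh_sub_eq τ hτ c μ hμ).symm
  have hcont : Continuous fun w : ℂ => ‖w‖ ^ 2 :=
    (continuous_norm).pow 2
  exact (hcont.tendsto _).comp hcomp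

private lemma abs_softThresh_sub_le (τ : ℝ) (hτ : 0 ≤ τ) (c : ℂ) (μ : ℝ) :
    ‖softThresh ((μ:ℂ) + c) τ - (μ:ℂ)‖ ≤ ‖c‖ + τ := by
  set x : ℂ := (μ:ℂ) + c with hx
  by_cases h : τ < ‖x‖
  · rw [softThresh_sub_eq τ hτ c μ h]
    refine le_trans (norm_sub_le _ _) ?_
    have hxpos : 0 < ‖x‖ := lt_of_le_of_lt hτ h
    have : ‖(τ:ℂ) * (x / ((‖x‖ : ℝ) : ℂ))‖ = τ := by
      rw [norm_mul, norm_div, Complex.norm_real, Complex.norm_real, Real.norm_eq_abs, Real.norm_eq_abs,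
        abs_of_nonneg hτ, abs_of_pos hxpos, div_self (ne_of_gt hxpos), mul_one]
    rw [this]
  · rw [softThresh, if_neg h, zero_sub, norm_neg, Complex.norm_real, Real.norm_eq_abs]
    push_neg at h
    have hμx : (μ:ℂ) = x - c := by rw [hx]; ring
    calc |μ| = ‖(μ:ℂ)‖ := by rw [Complex.norm_real, Real.norm_eq_abs]
    _ = ‖x - c‖ := by rw [hμx]
    _ ≤ ‖x‖ + ‖c‖ := norm_sub_le _ _
    _ ≤ τ + ‖c‖ := by linarith
    _ = ‖c‖ + τ := by ring

private lemma aux_meas (τ μ : ℝ) : AEStronglyMeasurable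
    (fun z : ℝ × ℝ =>
      ‖softThresh ((μ : ℂ) + (z.1 : ℂ) + Complex.I * (z.2 : ℂ)) τ - (μ : ℂ)‖ ^ 2 *
        ((1 / Real.pi) * Real.exp (-(z.1 ^ 2 + z.2 ^ 2)))) volume := by
  apply Measurable.aestronglyMeasurable
  apply Measurable.mul
  · apply Measurable.pow _ measurable_const
    apply continuous_norm.measurable.comp
    apply Measurable.sub _ measurable_const
    apply (measurable_softThresh τ).comp
    fun_prop
  · fun_prop

private lemma aux_Bint (τ : ℝ) (hτ : 0 ≤ τ) : Integrable
    (fun z : ℝ × ℝ => (‖(z.1 : ℂ) + Complex.I * (z.2 : ℂ)‖ + τ) ^ 2 *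
      ((1 / Real.pi) * Real.exp (-(z.1 ^ 2 + z.2 ^ 2)))) := by
  have hg : Integrable (fun z : ℝ × ℝ =>
      (2/Real.pi) * ((z.1^2 * Real.exp (-z.1^2)) * Real.exp (-z.2^2))
      + (2/Real.pi) * (Real.exp (-z.1^2) * (z.2^2 * Real.exp (-z.2^2)))
      + (2*τ^2/Real.pi) * (Real.exp (-z.1^2) * Real.exp (-z.2^2))) :=
    (((aux_int2d aux_int_sq aux_int_g).const_mul _).add
      ((aux_int2d aux_int_g aux_int_sq).const_mul _)).add
      ((aux_int2d aux_int_g aux_int_g).const_mul _)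
  refine hg.mono' ?_ ?_
  · apply Continuous.aestronglyMeasurable
    apply Continuous.mul
    · apply Continuous.pow
      apply Continuous.add _ continuous_const
      exact continuous_norm.comp (by continuity)
    · exact continuous_const.mul
        ((continuous_fst.pow 2).add (continuous_snd.pow 2)).neg.rexp
  · refine Filter.Eventually.of_forall fun z => ?_
    have hπ := Real.pi_pos
    rw [Real.norm_eq_abs, abs_of_nonneg (by positivity)]
    have habsc : ‖(z.1 : ℂ) + Complex.I * (z.2 : ℂ)‖ ^ 2 = z.1 ^ 2 + z.2 ^ 2 := by
      rw [Complex.sq_norm, Complex.normSq_apply]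
      simp
      ring
    have hb : (‖(z.1 : ℂ) + Complex.I * (z.2 : ℂ)‖ + τ)^2
        ≤ 2*(z.1^2 + z.2^2) + 2*τ^2 := by
      nlinarith [sq_nonneg (‖(z.1 : ℂ) + Complex.I * (z.2 : ℂ)‖ - τ)]
    have hwnn : (0:ℝ) ≤ (1 / Real.pi) * Real.exp (-(z.1 ^ 2 + z.2 ^ 2)) := by positivity
    refine le_trans (mul_le_mul_of_nonneg_right hb hwnn) (le_of_eq ?_)
    rw [show Real.exp (-(z.1 ^ 2 + z.2 ^ 2)) = Real.exp (-z.1^2) * Real.exp (-z.2^2) by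
      rw [← Real.exp_add]; ring_nf]
    field_simp

private lemma aux_Lval (τ : ℝ) :
    ∫ z : ℝ × ℝ, ((z.1 - τ)^2 + z.2^2) * ((1 / Real.pi) * Real.exp (-(z.1 ^ 2 + z.2 ^ 2)))
      = 1 + τ^2 := by
  have hπ := Real.pi_pos
  have hxint : Integrable (fun x : ℝ => (2*τ) * (x * Real.exp (-x^2))) :=
    aux_int_x.const_mul _
  have hA : Integrable (fun x : ℝ =>
      x^2 * Real.exp (-x^2) - (2*τ) * (x * Real.exp (-x^2))) := aux_int_sq.sub hxint
  have hτg : Integrable (fun x : ℝ => τ^2 * Real.exp (-x^2)) := aux_int_g.const_mul _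
  have hint1 : Integrable (fun x : ℝ => (x-τ)^2 * Real.exp (-x^2)) := by
    refine (hA.add hτg).congr (Filter.Eventually.of_forall fun x => by simp only [Pi.add_apply]; ring)
  have hI1 : ∫ x : ℝ, (x-τ)^2 * Real.exp (-x^2)
      = Real.sqrt Real.pi / 2 + τ^2 * Real.sqrt Real.pi := by
    have hsplit : ∫ x : ℝ, (x-τ)^2 * Real.exp (-x^2)
        = ∫ x : ℝ, ((x^2 * Real.exp (-x^2) - (2*τ) * (x * Real.exp (-x^2)))
          + τ^2 * Real.exp (-x^2)) :=
      integral_congr_ae (Filter.Eventually.of_forall fun x => by ring)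
    have h1 : ∫ x : ℝ, ((x^2 * Real.exp (-x^2) - (2*τ) * (x * Real.exp (-x^2)))
          + τ^2 * Real.exp (-x^2))
        = (∫ x : ℝ, (x^2 * Real.exp (-x^2) - (2*τ) * (x * Real.exp (-x^2))))
          + ∫ x : ℝ, τ^2 * Real.exp (-x^2) := integral_add hA hτg
    have h2 : ∫ x : ℝ, (x^2 * Real.exp (-x^2) - (2*τ) * (x * Real.exp (-x^2)))
        = (∫ x : ℝ, x^2 * Real.exp (-x^2)) - ∫ x : ℝ, (2*τ) * (x * Real.exp (-x^2)) :=
      integral_sub aux_int_sq hxint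
    rw [hsplit, h1, h2, integral_const_mul, integral_const_mul,
      aux_sq_val, aux_odd_val, aux_gauss_val]
    ring
  have hre : ∀ z : ℝ × ℝ,
      ((z.1 - τ)^2 + z.2^2) * ((1 / Real.pi) * Real.exp (-(z.1 ^ 2 + z.2 ^ 2)))
      = (1/Real.pi) * (((z.1-τ)^2 * Real.exp (-z.1^2)) * Real.exp (-z.2^2)
        + Real.exp (-z.1^2) * (z.2^2 * Real.exp (-z.2^2))) := by
    intro z
    rw [show Real.exp (-(z.1 ^ 2 + z.2 ^ 2)) = Real.exp (-z.1^2) * Real.exp (-z.2^2) by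
      rw [← Real.exp_add]; ring_nf]
    field_simp
  rw [integral_congr_ae (Filter.Eventually.of_forall hre), integral_const_mul]
  have hadd : ∫ z : ℝ × ℝ, (((z.1-τ)^2 * Real.exp (-z.1^2)) * Real.exp (-z.2^2)
        + Real.exp (-z.1^2) * (z.2^2 * Real.exp (-z.2^2)))
      = (∫ z : ℝ × ℝ, ((z.1-τ)^2 * Real.exp (-z.1^2)) * Real.exp (-z.2^2))
        + ∫ z : ℝ × ℝ, Real.exp (-z.1^2) * (z.2^2 * Real.exp (-z.2^2)) :=
    integral_add (aux_int2d hint1 aux_int_g) (aux_int2d aux_int_g aux_int_sq)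
  have hp1 : ∫ z : ℝ × ℝ, ((z.1-τ)^2 * Real.exp (-z.1^2)) * Real.exp (-z.2^2)
      = (∫ x : ℝ, (x-τ)^2 * Real.exp (-x^2)) * ∫ y : ℝ, Real.exp (-y^2) :=
    aux_int2d_val (fun x => (x-τ)^2 * Real.exp (-x^2)) (fun y => Real.exp (-y^2))
  have hp2 : ∫ z : ℝ × ℝ, Real.exp (-z.1^2) * (z.2^2 * Real.exp (-z.2^2))
      = (∫ x : ℝ, Real.exp (-x^2)) * ∫ y : ℝ, y^2 * Real.exp (-y^2) :=
    aux_int2d_val (fun x => Real.exp (-x^2)) (fun y => y^2 * Real.exp (-y^2))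
  rw [hadd, hp1, hp2, hI1, aux_sq_val, aux_gauss_val]
  have hππ : Real.sqrt Real.pi * Real.sqrt Real.pi = Real.pi :=
    Real.mul_self_sqrt Real.pi_pos.le
  field_simp
  nlinarith [Real.pi_pos, Real.sqrt_nonneg Real.pi]

/-- For every `τ ≥ 0`, the soft-thresholding risk tends to `1 + τ²` as the signal
amplitude grows: `lim_{μ → ∞} r(μ, τ) = 1 + τ²`. -/
theorem softRisk_tendsto_atTop (τ : ℝ) (hτ : 0 ≤ τ) :
    Tendsto (fun μ : ℝ => softRisk μ τ) atTop (nhds (1 + τ ^ 2)) := by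
  have hπ := Real.pi_pos
  have habsL : ∀ z : ℝ × ℝ,
      ‖((z.1 : ℂ) + Complex.I * (z.2 : ℂ)) - (τ:ℂ)‖ ^ 2
        = (z.1 - τ)^2 + z.2^2 := by
    intro z
    rw [Complex.sq_norm, Complex.normSq_apply]
    simp
    ring
  have hdct : Tendsto (fun μ : ℝ => softRisk μ τ) atTop
      (nhds (∫ z : ℝ × ℝ, ((z.1 - τ)^2 + z.2^2)
        * ((1 / Real.pi) * Real.exp (-(z.1 ^ 2 + z.2 ^ 2))))) := by
    unfold softRisk
    apply tendsto_integral_filter_of_dominated_convergence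
      (fun z : ℝ × ℝ => (‖(z.1 : ℂ) + Complex.I * (z.2 : ℂ)‖ + τ) ^ 2 *
        ((1 / Real.pi) * Real.exp (-(z.1 ^ 2 + z.2 ^ 2))))
    · exact Filter.Eventually.of_forall fun μ => aux_meas τ μ
    · refine Filter.Eventually.of_forall fun μ => Filter.Eventually.of_forall fun z => ?_
      rw [Real.norm_eq_abs, abs_of_nonneg (by positivity)]
      have harg : (μ : ℂ) + (z.1 : ℂ) + Complex.I * (z.2 : ℂ)
          = (μ:ℂ) + ((z.1 : ℂ) + Complex.I * (z.2 : ℂ)) := by ring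
      rw [harg]
      have hb := abs_softThresh_sub_le τ hτ ((z.1 : ℂ) + Complex.I * (z.2 : ℂ)) μ
      have hb2 := pow_le_pow_left₀ (norm_nonneg _) hb 2
      exact mul_le_mul_of_nonneg_right hb2 (by positivity)
    · exact aux_Bint τ hτ
    · refine Filter.Eventually.of_forall fun z => ?_
      have harg : ∀ μ : ℝ, (μ : ℂ) + (z.1 : ℂ) + Complex.I * (z.2 : ℂ)
          = (μ:ℂ) + ((z.1 : ℂ) + Complex.I * (z.2 : ℂ)) := fun μ => by ring
      simp only [harg]
      rw [← habsL z]
      exact (tendsto_pointwise τ hτ ((z.1 : ℂ) + Complex.I * (z.2 : ℂ))).mul_const _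
  rwa [aux_Lval τ] at hdct
end

section
/- Let ν be a probability measure on ℂ, δ > 0, τ ≥ 0, σ = 0, and set ε = ν({x : x ≠ 0}). Then the slope of the noiseless MSE map at zero exists and equals lim_{m → 0⁺} Ψ(m)/m = ( (1−ε)·2χ₂(τ) + ε·(1+τ²) ) / δ; in particular this slope depends on ν only through ε and not on the distribution of the non-zero values. -/
open MeasureTheory Filter

open Real Topology

lemma int_gauss : ∫ x : ℝ, Real.exp (-x ^ 2) = √π := by
  have := integral_gaussian 1
  simpa using this

lemma int_x_gauss : ∫ x : ℝ, x * Real.exp (-x ^ 2) = 0 := by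
  have h := integral_neg_eq_self (fun x : ℝ => x * Real.exp (-x ^ 2)) volume
  simp only [neg_sq, neg_mul] at h
  have : ∫ x : ℝ, -(x * Real.exp (-x ^ 2)) = ∫ x : ℝ, x * Real.exp (-x ^ 2) := h
  rw [integral_neg] at this
  linarith

lemma int_sq_gauss : ∫ x : ℝ, x ^ 2 * Real.exp (-x ^ 2) = √π / 2 := by
  have heven : ∫ x : ℝ, x ^ 2 * Real.exp (-x ^ 2)
      = 2 * ∫ x in Set.Ioi (0:ℝ), x ^ 2 * Real.exp (-x ^ 2) := by
    rw [← integral_comp_abs (f := fun x => x ^ 2 * Real.exp (-x ^ 2))]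
    simp [sq_abs]
  have hIoi : ∫ x in Set.Ioi (0:ℝ), x ^ 2 * Real.exp (-x ^ 2) = √π / 4 := by
    have h := integral_rpow_mul_exp_neg_rpow (p := 2) (q := 2) (by norm_num) (by norm_num)
    have congr1 : ∫ x in Set.Ioi (0:ℝ), x ^ (2:ℝ) * Real.exp (-x ^ (2:ℝ))
        = ∫ x in Set.Ioi (0:ℝ), x ^ 2 * Real.exp (-x ^ 2) := by
      refine setIntegral_congr_fun measurableSet_Ioi (fun x hx => ?_)
      norm_num
    rw [congr1] at h
    rw [h]
    have : ((2:ℝ) + 1) / 2 = 1/2 + 1 := by norm_num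
    rw [this, Real.Gamma_add_one (by norm_num), Real.Gamma_one_half_eq]
    ring
  rw [heven, hIoi]; ring

lemma ie : Integrable (fun x : ℝ => Real.exp (-x ^ 2)) := by
  simpa using integrable_exp_neg_mul_sq (b := 1) one_pos

lemma ixe : Integrable (fun x : ℝ => x * Real.exp (-x ^ 2)) := by
  have := integrable_rpow_mul_exp_neg_mul_sq (b := 1) one_pos (s := 1) (by norm_num)
  simpa using this

lemma ix2e : Integrable (fun x : ℝ => x ^ 2 * Real.exp (-x ^ 2)) := by
  have := integrable_rpow_mul_exp_neg_mul_sq (b := 1) one_pos (s := 2) (by norm_num)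
  simpa using this

lemma quad_eq (α β : ℝ) : (fun z : ℝ × ℝ => (α + β * z.1 + z.1 ^ 2 + z.2 ^ 2) *
      ((1 / π) * Real.exp (-(z.1 ^ 2 + z.2 ^ 2))))
    = fun z : ℝ × ℝ =>
      ((α * ((1/π) * Real.exp (-z.1^2)) + β * ((1/π) * (z.1 * Real.exp (-z.1^2)))
        + (1/π) * (z.1^2 * Real.exp (-z.1^2))) * Real.exp (-z.2^2)
      + ((1/π) * Real.exp (-z.1^2)) * (z.2^2 * Real.exp (-z.2^2))) := by
  funext z
  rw [show -(z.1^2+z.2^2) = -z.1^2 + -z.2^2 by ring, Real.exp_add]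
  ring

lemma integrable_quad (α β : ℝ) :
    Integrable (fun z : ℝ × ℝ => (α + β * z.1 + z.1 ^ 2 + z.2 ^ 2) *
      ((1 / π) * Real.exp (-(z.1 ^ 2 + z.2 ^ 2)))) := by
  rw [quad_eq, Measure.volume_eq_prod]
  exact (((((ie.const_mul (1/π)).const_mul α).add
        ((ixe.const_mul (1/π)).const_mul β)).add
        ((ix2e).const_mul (1/π))).mul_prod ie).add
    ((ie.const_mul (1/π)).mul_prod (ix2e))

lemma integral_quad (α β : ℝ) :
    ∫ z : ℝ × ℝ, (α + β * z.1 + z.1 ^ 2 + z.2 ^ 2) *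
      ((1 / π) * Real.exp (-(z.1 ^ 2 + z.2 ^ 2))) = α + 1 := by
  have h1 : Integrable (fun x : ℝ => α * ((1/π) * Real.exp (-x^2))
      + β * ((1/π) * (x * Real.exp (-x^2))) + (1/π) * (x^2 * Real.exp (-x^2))) :=
    (((ie.const_mul (1/π)).const_mul α).add
        ((ixe.const_mul (1/π)).const_mul β)).add ((ix2e).const_mul (1/π))
  have h2 : Integrable (fun z : ℝ × ℝ =>
      (α * ((1/π) * Real.exp (-z.1^2)) + β * ((1/π) * (z.1 * Real.exp (-z.1^2)))
        + (1/π) * (z.1^2 * Real.exp (-z.1^2))) * Real.exp (-z.2^2)) (volume.prod volume) :=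
    h1.mul_prod ie
  have h3 : Integrable (fun z : ℝ × ℝ =>
      ((1/π) * Real.exp (-z.1^2)) * (z.2^2 * Real.exp (-z.2^2))) (volume.prod volume) :=
    (ie.const_mul (1/π)).mul_prod ix2e
  rw [quad_eq, Measure.volume_eq_prod, integral_add h2 h3,
    integral_prod_mul (f := fun x : ℝ => α * ((1/π) * Real.exp (-x^2))
      + β * ((1/π) * (x * Real.exp (-x^2))) + (1/π) * (x^2 * Real.exp (-x^2)))
      (g := fun y : ℝ => Real.exp (-y^2)),
    integral_prod_mul (f := fun x : ℝ => (1/π) * Real.exp (-x^2))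
      (g := fun y : ℝ => y^2 * Real.exp (-y^2))]
  have ha : Integrable (fun x : ℝ => α * ((1/π) * Real.exp (-x^2))) :=
    (ie.const_mul (1/π)).const_mul α
  have hb : Integrable (fun x : ℝ => β * ((1/π) * (x * Real.exp (-x^2)))) :=
    (ixe.const_mul (1/π)).const_mul β
  have hab : Integrable (fun x : ℝ => α * ((1/π) * Real.exp (-x^2))
      + β * ((1/π) * (x * Real.exp (-x^2)))) := ha.add hb
  have hc : Integrable (fun x : ℝ => (1/π) * (x^2 * Real.exp (-x^2))) :=
    (ix2e).const_mul (1/π)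
  have e1 : ∫ x : ℝ, α * ((1/π) * Real.exp (-x^2))
      + β * ((1/π) * (x * Real.exp (-x^2))) + (1/π) * (x^2 * Real.exp (-x^2))
      = α * ((1/π) * √π) + β * ((1/π) * 0) + (1/π) * (√π/2) := by
    rw [integral_add hab hc, integral_add ha hb]
    simp only [integral_const_mul]
    rw [int_gauss, int_x_gauss, int_sq_gauss]
  rw [e1]
  simp only [integral_const_mul]
  rw [int_gauss, int_sq_gauss]
  have hπ : √π * √π = π := Real.mul_self_sqrt pi_pos.le
  field_simp
  linear_combination (2 + 2*α) * hπ

/-- `χ₂(τ) = ∫_τ^∞ ω (ω − τ)² e^{−ω²} dω`. -/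
noncomputable def chi2 (τ : ℝ) : ℝ :=
  ∫ ω in Set.Ioi τ, ω * (ω - τ) ^ 2 * Real.exp (-ω ^ 2)

/-- The MSE map `Ψ(m) = (σ² + m/δ) ∫ r(|x|/√(σ² + m/δ), τ) dν(x)`
(with the convention `Ψ(0) = 0` when `σ = 0`, via division by zero). -/
noncomputable def mseMap (ν : Measure ℂ) (δ σ τ m : ℝ) : ℝ :=
  (σ ^ 2 + m / δ) *
    ∫ x, softRisk (‖x‖ / Real.sqrt (σ ^ 2 + m / δ)) τ ∂ν


lemma softThresh_sub_le {τ : ℝ} (hτ : 0 ≤ τ) (μ : ℝ) (ζ : ℂ) :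
    ‖softThresh ((μ:ℂ) + ζ) τ - μ‖ ≤ ‖ζ‖ + τ := by
  unfold softThresh
  split_ifs with h
  · have ha : (0:ℝ) < ‖(μ:ℂ) + ζ‖ := lt_of_le_of_lt hτ h
    have key : ((1 - τ / ‖(μ:ℂ)+ζ‖ : ℝ) : ℂ) * ((μ:ℂ)+ζ) - μ
        = ζ - ((τ / ‖(μ:ℂ)+ζ‖ : ℝ) : ℂ) * ((μ:ℂ)+ζ) := by push_cast; ring
    rw [key]
    have htri : ‖ζ - ((τ / ‖(μ:ℂ)+ζ‖ : ℝ) : ℂ) * ((μ:ℂ)+ζ)‖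
        ≤ ‖ζ‖ + ‖((τ / ‖(μ:ℂ)+ζ‖ : ℝ) : ℂ) * ((μ:ℂ)+ζ)‖ := by
      simpa using
        norm_sub_le ζ (((τ / ‖(μ:ℂ)+ζ‖ : ℝ) : ℂ) * ((μ:ℂ)+ζ))
    refine le_trans htri ?_
    rw [norm_mul, Complex.norm_real, Real.norm_eq_abs, abs_of_nonneg (div_nonneg hτ ha.le),
      div_mul_cancel₀ _ (ne_of_gt ha)]
  · have : (0:ℂ) - (μ:ℂ) = -(μ:ℂ) := by ring
    rw [this, norm_neg]
    have hμ : ‖(μ:ℂ)‖ ≤ ‖(μ:ℂ)+ζ‖ + ‖ζ‖ := by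
      calc ‖(μ:ℂ)‖ = ‖((μ:ℂ)+ζ) - ζ‖ := by ring_nf
      _ ≤ ‖(μ:ℂ)+ζ‖ + ‖ζ‖ := by
          simpa using norm_sub_le ((μ:ℂ)+ζ) ζ
    push_neg at h
    linarith

lemma softThresh_measurable (τ : ℝ) : Measurable (fun x => softThresh x τ) := by
  unfold softThresh
  refine Measurable.ite (measurableSet_lt measurable_const continuous_norm.measurable) ?_ measurable_const
  exact (Complex.measurable_ofReal.comp
    (measurable_const.sub (measurable_const.div continuous_norm.measurable))).mul measurable_id

lemma joint_meas (τ : ℝ) : Measurable (fun p : ℝ × (ℝ × ℝ) =>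
    ‖softThresh ((p.1 : ℂ) + (p.2.1 : ℂ) + Complex.I * (p.2.2 : ℂ)) τ - (p.1 : ℂ)‖ ^ 2 *
      ((1 / π) * Real.exp (-(p.2.1 ^ 2 + p.2.2 ^ 2)))) := by
  have hc : Continuous (fun p : ℝ × (ℝ × ℝ) => (p.1 : ℂ) + (p.2.1 : ℂ) + Complex.I * (p.2.2 : ℂ)) := by
    fun_prop
  have h1 : Measurable (fun p : ℝ × (ℝ × ℝ) =>
      ‖softThresh ((p.1 : ℂ) + (p.2.1 : ℂ) + Complex.I * (p.2.2 : ℂ)) τ - (p.1 : ℂ)‖) :=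
    continuous_norm.measurable.comp
      (((softThresh_measurable τ).comp hc.measurable).sub
        (Complex.measurable_ofReal.comp measurable_fst))
  have h2 : Measurable (fun p : ℝ × (ℝ × ℝ) => (1 / π) * Real.exp (-(p.2.1 ^ 2 + p.2.2 ^ 2))) :=
    (Real.measurable_exp.comp
      (((measurable_snd.fst.pow_const 2).add (measurable_snd.snd.pow_const 2)).neg)).const_mul (1/π)
  have h3 : Measurable (fun p : ℝ × (ℝ × ℝ) =>
      ‖softThresh ((p.1 : ℂ) + (p.2.1 : ℂ) + Complex.I * (p.2.2 : ℂ)) τ - (p.1 : ℂ)‖ ^ 2) :=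
    h1.pow_const 2
  exact h3.mul h2

lemma integrand_meas (τ μ : ℝ) : Measurable (fun z : ℝ × ℝ =>
    ‖softThresh ((μ : ℂ) + (z.1 : ℂ) + Complex.I * (z.2 : ℂ)) τ - (μ : ℂ)‖ ^ 2 *
      ((1 / π) * Real.exp (-(z.1 ^ 2 + z.2 ^ 2)))) := by
  have hc : Continuous (fun z : ℝ × ℝ => (μ : ℂ) + (z.1 : ℂ) + Complex.I * (z.2 : ℂ)) := by
    fun_prop
  have h1 : Measurable (fun z : ℝ × ℝ =>
      ‖softThresh ((μ : ℂ) + (z.1 : ℂ) + Complex.I * (z.2 : ℂ)) τ - (μ : ℂ)‖) :=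
    continuous_norm.measurable.comp
      (((softThresh_measurable τ).comp hc.measurable).sub measurable_const)
  have h2 : Measurable (fun z : ℝ × ℝ => (1 / π) * Real.exp (-(z.1 ^ 2 + z.2 ^ 2))) :=
    (Real.measurable_exp.comp
      (((measurable_fst.pow_const 2).add (measurable_snd.pow_const 2)).neg)).const_mul (1/π)
  have h3 : Measurable (fun z : ℝ × ℝ =>
      ‖softThresh ((μ : ℂ) + (z.1 : ℂ) + Complex.I * (z.2 : ℂ)) τ - (μ : ℂ)‖ ^ 2) :=
    h1.pow_const 2
  exact h3.mul h2

lemma integrand_le {τ : ℝ} (hτ : 0 ≤ τ) (μ : ℝ) (z : ℝ × ℝ) :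
    ‖softThresh ((μ : ℂ) + (z.1 : ℂ) + Complex.I * (z.2 : ℂ)) τ - (μ : ℂ)‖ ^ 2 *
      ((1 / π) * Real.exp (-(z.1 ^ 2 + z.2 ^ 2)))
    ≤ 2 * ((τ ^ 2 + 0 * z.1 + z.1 ^ 2 + z.2 ^ 2) * ((1 / π) * Real.exp (-(z.1 ^ 2 + z.2 ^ 2)))) := by
  have hpos : (0:ℝ) < 1 / π * Real.exp (-(z.1 ^ 2 + z.2 ^ 2)) := by positivity
  have habs : ‖(z.1 : ℂ) + Complex.I * (z.2 : ℂ)‖ ^ 2 = z.1 ^ 2 + z.2 ^ 2 := by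
    rw [mul_comm Complex.I, Complex.norm_add_mul_I, Real.sq_sqrt (by positivity)]
  have h1 : ‖softThresh ((μ : ℂ) + (z.1 : ℂ) + Complex.I * (z.2 : ℂ)) τ - (μ : ℂ)‖
      ≤ ‖(z.1 : ℂ) + Complex.I * (z.2 : ℂ)‖ + τ := by
    have := softThresh_sub_le hτ μ ((z.1 : ℂ) + Complex.I * (z.2 : ℂ))
    rwa [← add_assoc] at this
  have h2 : ‖softThresh ((μ : ℂ) + (z.1 : ℂ) + Complex.I * (z.2 : ℂ)) τ - (μ : ℂ)‖ ^ 2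
      ≤ 2 * (τ ^ 2 + 0 * z.1 + z.1 ^ 2 + z.2 ^ 2) := by
    have h0 : (0:ℝ) ≤ ‖softThresh ((μ : ℂ) + (z.1 : ℂ) + Complex.I * (z.2 : ℂ)) τ - (μ : ℂ)‖ :=
      norm_nonneg _
    nlinarith [sq_nonneg (‖(z.1 : ℂ) + Complex.I * (z.2 : ℂ)‖ - τ), habs,
      norm_nonneg ((z.1 : ℂ) + Complex.I * (z.2 : ℂ))]
  calc _ ≤ (2 * (τ ^ 2 + 0 * z.1 + z.1 ^ 2 + z.2 ^ 2)) * ((1 / π) * Real.exp (-(z.1 ^ 2 + z.2 ^ 2))) :=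
        mul_le_mul_of_nonneg_right h2 hpos.le
    _ = _ := by ring

lemma integrable_integrand {τ : ℝ} (hτ : 0 ≤ τ) (μ : ℝ) :
    Integrable (fun z : ℝ × ℝ =>
      ‖softThresh ((μ : ℂ) + (z.1 : ℂ) + Complex.I * (z.2 : ℂ)) τ - (μ : ℂ)‖ ^ 2 *
        ((1 / π) * Real.exp (-(z.1 ^ 2 + z.2 ^ 2)))) := by
  refine Integrable.mono' ((integrable_quad (τ^2) 0).const_mul 2)
    (integrand_meas τ μ).aestronglyMeasurable (ae_of_all _ fun z => ?_)
  rw [Real.norm_eq_abs, abs_of_nonneg (by positivity)]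
  exact integrand_le hτ μ z

lemma softRisk_nonneg (μ τ : ℝ) : 0 ≤ softRisk μ τ :=
  integral_nonneg fun z => by positivity

lemma softRisk_le {τ : ℝ} (hτ : 0 ≤ τ) (μ : ℝ) : softRisk μ τ ≤ 2 * (τ ^ 2 + 1) := by
  have h := integral_mono (integrable_integrand hτ μ) ((integrable_quad (τ^2) 0).const_mul 2)
    (integrand_le hτ μ)
  rw [integral_const_mul, integral_quad] at h
  exact h

lemma softRisk_meas (τ : ℝ) : Measurable (fun μ => softRisk μ τ) := by
  have h : StronglyMeasurable (fun μ : ℝ => ∫ z : ℝ × ℝ,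
      ‖softThresh ((μ : ℂ) + (z.1 : ℂ) + Complex.I * (z.2 : ℂ)) τ - (μ : ℂ)‖ ^ 2 *
        ((1 / π) * Real.exp (-(z.1 ^ 2 + z.2 ^ 2)))) :=
    StronglyMeasurable.integral_prod_right' ((joint_meas τ).stronglyMeasurable)
  unfold softRisk
  exact h.measurable

noncomputable def Haux (τ ρ : ℝ) : ℝ :=
  (if τ < ρ then (ρ - τ) ^ 2 else 0) * ((1 / π) * Real.exp (-ρ ^ 2))

lemma value_at_zero {τ : ℝ} (hτ : 0 ≤ τ) (z : ℝ × ℝ) :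
    ‖softThresh (((0:ℝ) : ℂ) + (z.1 : ℂ) + Complex.I * (z.2 : ℂ)) τ - ((0:ℝ) : ℂ)‖ ^ 2 *
      ((1 / π) * Real.exp (-(z.1 ^ 2 + z.2 ^ 2)))
    = Haux τ (Real.sqrt (z.1 ^ 2 + z.2 ^ 2)) := by
  have hw : ((0:ℝ) : ℂ) + (z.1 : ℂ) + Complex.I * (z.2 : ℂ) = (z.1 : ℂ) + (z.2 : ℂ) * Complex.I := by
    push_cast; ring
  have habs : ‖(z.1 : ℂ) + (z.2 : ℂ) * Complex.I‖ = Real.sqrt (z.1 ^ 2 + z.2 ^ 2) :=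
    Complex.norm_add_mul_I _ _
  have hsq : Real.sqrt (z.1 ^ 2 + z.2 ^ 2) ^ 2 = z.1 ^ 2 + z.2 ^ 2 :=
    Real.sq_sqrt (by positivity)
  rw [hw, Complex.ofReal_zero, sub_zero, Haux, ← habs, ← hsq]
  unfold softThresh
  split_ifs with h
  · have ha : (0:ℝ) < ‖(z.1 : ℂ) + (z.2 : ℂ) * Complex.I‖ := lt_of_le_of_lt hτ h
    rw [norm_mul, Complex.norm_real, Real.norm_eq_abs,
      abs_of_nonneg (by rw [sub_nonneg]; exact (div_le_one ha).mpr h.le)]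
    congr 2
    · field_simp
    · rw [habs]
  · simp
lemma softRisk_zero {τ : ℝ} (hτ : 0 ≤ τ) : softRisk 0 τ = 2 * chi2 τ := by
  have hrw : softRisk 0 τ = ∫ z : ℝ × ℝ, Haux τ (Real.sqrt (z.1 ^ 2 + z.2 ^ 2)) := by
    unfold softRisk
    congr 1
    funext z
    exact value_at_zero hτ z
  rw [hrw, ← integral_comp_polarCoord_symm (fun z : ℝ × ℝ => Haux τ (Real.sqrt (z.1 ^ 2 + z.2 ^ 2)))]
  have htarget : polarCoord.target = Set.Ioi (0:ℝ) ×ˢ Set.Ioo (-π) π := rfl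
  have hmeas : MeasurableSet (Set.Ioi (0:ℝ) ×ˢ Set.Ioo (-π) π) :=
    measurableSet_Ioi.prod measurableSet_Ioo
  have hcongr : ∫ p in Set.Ioi (0:ℝ) ×ˢ Set.Ioo (-π) π,
      p.1 • Haux τ (Real.sqrt ((polarCoord.symm p).1 ^ 2 + (polarCoord.symm p).2 ^ 2))
      = ∫ p in Set.Ioi (0:ℝ) ×ˢ Set.Ioo (-π) π, (p.1 * Haux τ p.1) * (1:ℝ) := by
    refine setIntegral_congr_fun hmeas (fun p hp => ?_)
    have hp1 : 0 < p.1 := hp.1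
    rw [polarCoord_symm_apply]
    have : (p.1 * Real.cos p.2) ^ 2 + (p.1 * Real.sin p.2) ^ 2 = p.1 ^ 2 := by
      rw [mul_pow, mul_pow, ← mul_add, Real.cos_sq_add_sin_sq, mul_one]
    rw [this, Real.sqrt_sq hp1.le]
    simp [smul_eq_mul]
  rw [htarget, hcongr, Measure.volume_eq_prod,
    setIntegral_prod_mul (fun ρ : ℝ => ρ * Haux τ ρ) (fun _ : ℝ => (1:ℝ))]
  have hθ : ∫ _ in Set.Ioo (-π) π, (1:ℝ) = 2 * π := by
    rw [setIntegral_const, measureReal_def, Real.volume_Ioo, smul_eq_mul, mul_one]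
    rw [ENNReal.toReal_ofReal (by linarith [pi_pos])]
    ring
  have hρ : ∫ ρ in Set.Ioi (0:ℝ), ρ * Haux τ ρ = (1/π) * chi2 τ := by
    have hind : (fun ρ : ℝ => ρ * Haux τ ρ)
        = fun ρ => Set.indicator (Set.Ioi τ)
            (fun ω => (1/π) * (ω * (ω - τ) ^ 2 * Real.exp (-ω ^ 2))) ρ := by
      funext ρ
      by_cases h : τ < ρ
      · rw [Haux, if_pos h, Set.indicator_apply, if_pos (Set.mem_Ioi.mpr h)]; ring
      · rw [Haux, if_neg h, Set.indicator_apply,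
          if_neg (fun hm => h (Set.mem_Ioi.mp hm))]; ring
    rw [hind, setIntegral_indicator measurableSet_Ioi,
      Set.Ioi_inter_Ioi, max_eq_right hτ, integral_const_mul]
    rfl
  rw [hθ, hρ]
  have : π ≠ 0 := pi_ne_zero
  field_simp

lemma pointwise_limit {τ : ℝ} (hτ : 0 ≤ τ) (z : ℝ × ℝ) :
    Tendsto (fun μ : ℝ =>
      ‖softThresh ((μ : ℂ) + (z.1 : ℂ) + Complex.I * (z.2 : ℂ)) τ - (μ : ℂ)‖ ^ 2 *
        ((1 / π) * Real.exp (-(z.1 ^ 2 + z.2 ^ 2)))) atTop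
      (𝓝 (((z.1 - τ) ^ 2 + z.2 ^ 2) * ((1 / π) * Real.exp (-(z.1 ^ 2 + z.2 ^ 2))))) := by
  set ζ : ℂ := (z.1 : ℂ) + Complex.I * (z.2 : ℂ) with hζ
  set u : ℝ → ℂ := fun μ => 1 + ζ * (μ : ℂ)⁻¹ with hu
  -- limit of u
  have hinv : Tendsto (fun μ : ℝ => ((μ : ℂ))⁻¹) atTop (𝓝 0) := by
    have h1 : Tendsto (fun μ : ℝ => μ⁻¹) atTop (𝓝 (0:ℝ)) := tendsto_inv_atTop_zero
    have h2 : Tendsto (fun μ : ℝ => ((μ⁻¹ : ℝ) : ℂ)) atTop (𝓝 ((0:ℝ):ℂ)) :=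
      (Complex.continuous_ofReal.tendsto _).comp h1
    simpa [Complex.ofReal_inv] using h2
  have hul : Tendsto u atTop (𝓝 1) := by
    have := (tendsto_const_nhds (x := ζ) (f := atTop)).mul hinv
    rw [mul_zero] at this
    simpa using (tendsto_const_nhds (x := (1:ℂ)) (f := atTop)).add this
  have habsu : Tendsto (fun μ => ((‖u μ‖ : ℝ) : ℂ)) atTop (𝓝 1) := by
    have h1 : Tendsto (fun μ => ‖u μ‖) atTop (𝓝 (‖(1:ℂ)‖)) :=
      (continuous_norm.tendsto _).comp hul
    rw [norm_one] at h1
    have h2 := (Complex.continuous_ofReal.tendsto _).comp h1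
    simpa [Function.comp_def] using h2
  have hq : Tendsto (fun μ => u μ / ((‖u μ‖ : ℝ) : ℂ)) atTop (𝓝 1) := by
    have := hul.div habsu one_ne_zero
    simpa [Pi.div_def] using this
  have hlim : Tendsto (fun μ =>
      ‖ζ - (τ : ℂ) * (u μ / ((‖u μ‖ : ℝ) : ℂ))‖ ^ 2 *
        ((1 / π) * Real.exp (-(z.1 ^ 2 + z.2 ^ 2)))) atTop
      (𝓝 (‖ζ - (τ : ℂ)‖ ^ 2 * ((1 / π) * Real.exp (-(z.1 ^ 2 + z.2 ^ 2))))) := by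
    have h1 : Tendsto (fun μ => ζ - (τ : ℂ) * (u μ / ((‖u μ‖ : ℝ) : ℂ))) atTop
        (𝓝 (ζ - (τ : ℂ))) := by
      have := (tendsto_const_nhds (x := ζ) (f := atTop)).sub
        ((tendsto_const_nhds (x := (τ:ℂ)) (f := atTop)).mul hq)
      simpa using this
    have h2 : Tendsto (fun μ => ‖ζ - (τ : ℂ) * (u μ / ((‖u μ‖ : ℝ) : ℂ))‖)
        atTop (𝓝 (‖ζ - (τ : ℂ)‖)) := (continuous_norm.tendsto _).comp h1
    exact ((h2.pow 2).mul_const _)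
  have habsζτ : ‖ζ - (τ : ℂ)‖ ^ 2 = (z.1 - τ) ^ 2 + z.2 ^ 2 := by
    have : ζ - (τ : ℂ) = ((z.1 - τ : ℝ) : ℂ) + (z.2 : ℝ) * Complex.I := by
      rw [hζ]; push_cast; ring
    rw [this, Complex.norm_add_mul_I, Real.sq_sqrt (by positivity)]
  rw [← habsζτ]
  refine Tendsto.congr' ?_ hlim
  -- eventual equality
  filter_upwards [eventually_ge_atTop (max 1 (τ + ‖ζ‖ + 1))] with μ hμ
  have hμ1 : (1:ℝ) ≤ μ := le_trans (le_max_left _ _) hμ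
  have hμ0 : (0:ℝ) < μ := lt_of_lt_of_le one_pos hμ1
  have hμ2 : τ + ‖ζ‖ + 1 ≤ μ := le_trans (le_max_right _ _) hμ
  have hw : (μ : ℂ) + (z.1 : ℂ) + Complex.I * (z.2 : ℂ) = (μ : ℂ) + ζ := by rw [hζ]; ring
  have hwabs : τ < ‖(μ : ℂ) + ζ‖ := by
    have h3 : ‖(μ:ℂ)‖ ≤ ‖(μ:ℂ) + ζ‖ + ‖ζ‖ := by
      simpa using norm_sub_le ((μ:ℂ) + ζ) ζ
    rw [Complex.norm_real, Real.norm_eq_abs, abs_of_pos hμ0] at h3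
    linarith
  have hw0 : (0:ℝ) < ‖(μ:ℂ) + ζ‖ := lt_of_le_of_lt hτ hwabs
  have hμc : (μ:ℂ) ≠ 0 := by exact_mod_cast ne_of_gt hμ0
  have hueq : (μ : ℂ) + ζ = (μ : ℂ) * u μ := by
    rw [hu]
    rw [mul_add, mul_one, mul_comm ((μ:ℂ)) (ζ * (↑μ)⁻¹), mul_assoc,
      inv_mul_cancel₀ hμc, mul_one]
  have huabs : ‖(μ:ℂ) + ζ‖ = μ * ‖u μ‖ := by
    rw [hueq, norm_mul, Complex.norm_real, Real.norm_eq_abs, abs_of_pos hμ0]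
  have hau : ‖u μ‖ ≠ 0 := by
    intro h0
    rw [h0, mul_zero] at huabs
    exact (ne_of_gt hw0) huabs
  -- compute softThresh
  rw [hw]
  unfold softThresh
  rw [if_pos hwabs]
  congr 2
  have key : ((1 - τ / ‖(μ:ℂ) + ζ‖ : ℝ) : ℂ) * ((μ:ℂ) + ζ) - (μ:ℂ)
      = ζ - ((τ / ‖(μ:ℂ) + ζ‖ : ℝ) : ℂ) * ((μ:ℂ) + ζ) := by
    push_cast; ring
  rw [key, huabs, hueq, Complex.ofReal_div, Complex.ofReal_mul]
  congr 1
  have hstep : ((τ:ℂ)/(((μ:ℝ):ℂ) * ((‖u μ‖ : ℝ) : ℂ))) * ((μ:ℂ) * u μ)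
      = ((μ:ℂ) * ((τ:ℂ) * u μ)) / ((μ:ℂ) * ((‖u μ‖ : ℝ) : ℂ)) := by ring
  rw [hstep, mul_div_mul_left _ _ hμc, mul_div_assoc]

lemma softRisk_tendsto {τ : ℝ} (hτ : 0 ≤ τ) :
    Tendsto (fun μ => softRisk μ τ) atTop (𝓝 (1 + τ ^ 2)) := by
  have key := tendsto_integral_filter_of_dominated_convergence
    (μ := (volume : Measure (ℝ × ℝ)))
    (F := fun (μ : ℝ) (z : ℝ × ℝ) =>
      ‖softThresh ((μ : ℂ) + (z.1 : ℂ) + Complex.I * (z.2 : ℂ)) τ - (μ : ℂ)‖ ^ 2 *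
        ((1 / π) * Real.exp (-(z.1 ^ 2 + z.2 ^ 2))))
    (f := fun z : ℝ × ℝ => ((z.1 - τ) ^ 2 + z.2 ^ 2) * ((1 / π) * Real.exp (-(z.1 ^ 2 + z.2 ^ 2))))
    (bound := fun z : ℝ × ℝ =>
      2 * ((τ ^ 2 + 0 * z.1 + z.1 ^ 2 + z.2 ^ 2) * ((1 / π) * Real.exp (-(z.1 ^ 2 + z.2 ^ 2)))))
    (Eventually.of_forall fun μ => (integrand_meas τ μ).aestronglyMeasurable)
    (Eventually.of_forall fun μ => ae_of_all _ fun z => by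
      rw [Real.norm_eq_abs, abs_of_nonneg (by positivity)]
      exact integrand_le hτ μ z)
    ((integrable_quad (τ ^ 2) 0).const_mul 2)
    (ae_of_all _ fun z => pointwise_limit hτ z)
  have hval : ∫ z : ℝ × ℝ, ((z.1 - τ) ^ 2 + z.2 ^ 2) * ((1 / π) * Real.exp (-(z.1 ^ 2 + z.2 ^ 2)))
      = 1 + τ ^ 2 := by
    have h := integral_quad (τ ^ 2) (-2 * τ)
    rw [show (fun z : ℝ × ℝ => ((z.1 - τ) ^ 2 + z.2 ^ 2) * ((1 / π) * Real.exp (-(z.1 ^ 2 + z.2 ^ 2))))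
        = fun z : ℝ × ℝ => (τ ^ 2 + (-2 * τ) * z.1 + z.1 ^ 2 + z.2 ^ 2) *
            ((1 / π) * Real.exp (-(z.1 ^ 2 + z.2 ^ 2))) from funext fun z => by ring]
    rw [h]; ring
  rw [hval] at key
  exact key


/-- In the noiseless case `σ = 0`, with `ε = ν({x ≠ 0})`, the slope of the MSE map at
zero exists and equals `((1−ε)·2χ₂(τ) + ε(1+τ²))/δ`; in particular it depends on `ν`
only through `ε` and not on the distribution of the non-zero values. -/
theorem mseMap_slope_at_zero (ν : Measure ℂ) (hν : IsProbabilityMeasure ν)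
    (δ τ : ℝ) (hδ : 0 < δ) (hτ : 0 ≤ τ) :
    Tendsto (fun m : ℝ => mseMap ν δ 0 τ m / m) (nhdsWithin 0 (Set.Ioi 0))
      (nhds (((1 - (ν {x : ℂ | x ≠ 0}).toReal) * (2 * chi2 τ) +
                (ν {x : ℂ | x ≠ 0}).toReal * (1 + τ ^ 2)) / δ)) := by
  set l : Filter ℝ := nhdsWithin 0 (Set.Ioi 0) with hl
  set L : ℂ → ℝ := fun x => Set.indicator {(0:ℂ)} (fun _ => 2 * chi2 τ) x +
    Set.indicator {x : ℂ | x ≠ 0} (fun _ => 1 + τ ^ 2) x with hL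
  have hsne : MeasurableSet {x : ℂ | x ≠ 0} := (measurableSet_singleton (0:ℂ)).compl
  -- the DCT over ν
  have hmeasF : ∀ m : ℝ, Measurable (fun x : ℂ => softRisk (‖x‖ / Real.sqrt (m / δ)) τ) := by
    intro m
    exact (softRisk_meas τ).comp (continuous_norm.measurable.div_const _)
  have hlim : ∀ x : ℂ, Tendsto (fun m : ℝ => softRisk (‖x‖ / Real.sqrt (m / δ)) τ) l
      (𝓝 (L x)) := by
    intro x
    by_cases hx : x = 0
    · have : (fun m : ℝ => softRisk (‖x‖ / Real.sqrt (m / δ)) τ)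
          = fun _ : ℝ => softRisk 0 τ := by
        funext m; rw [hx, norm_zero, zero_div]
      rw [this]
      have hLx : L x = 2 * chi2 τ := by simp [hL, hx]
      rw [hLx, softRisk_zero hτ]
      exact tendsto_const_nhds
    · have hLx : L x = 1 + τ ^ 2 := by simp [hL, hx]
      rw [hLx]
      have habs : 0 < ‖x‖ := by
        simpa [norm_pos_iff] using hx
      have hsqrt : Tendsto (fun m : ℝ => Real.sqrt (m / δ)) l (nhdsWithin 0 (Set.Ioi 0)) := by
        rw [tendsto_nhdsWithin_iff]
        constructor
        · have h1 : Tendsto (fun m : ℝ => m / δ) l (𝓝 0) := by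
            have h2 : Tendsto (fun m : ℝ => m / δ) (𝓝 (0:ℝ)) (𝓝 ((0:ℝ) / δ)) :=
              (continuous_id.div_const δ).tendsto 0
            rw [zero_div] at h2
            exact h2.mono_left nhdsWithin_le_nhds
          have h3 := (Real.continuous_sqrt.tendsto 0).comp h1
          simpa [Function.comp_def] using h3
        · filter_upwards [self_mem_nhdsWithin] with m hm
          exact Real.sqrt_pos.mpr (div_pos hm hδ)
      have hdiv : Tendsto (fun m : ℝ => ‖x‖ / Real.sqrt (m / δ)) l atTop := by
        have hinv : Tendsto (fun m : ℝ => (Real.sqrt (m / δ))⁻¹) l atTop :=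
          hsqrt.inv_tendsto_nhdsGT_zero
        have := hinv.const_mul_atTop habs
        simpa [div_eq_mul_inv] using this
      exact (softRisk_tendsto hτ).comp hdiv
  have key : Tendsto (fun m : ℝ => ∫ x, softRisk (‖x‖ / Real.sqrt (m / δ)) τ ∂ν) l
      (𝓝 (∫ x, L x ∂ν)) := by
    refine tendsto_integral_filter_of_dominated_convergence
      (bound := fun _ => 2 * (τ ^ 2 + 1))
      (Eventually.of_forall fun m => (hmeasF m).aestronglyMeasurable)
      (Eventually.of_forall fun m => ae_of_all _ fun x => ?_)
      (integrable_const _)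
      (ae_of_all _ hlim)
    rw [Real.norm_eq_abs, abs_of_nonneg (softRisk_nonneg _ _)]
    exact softRisk_le hτ _
  have hL0 : Integrable (fun x : ℂ => Set.indicator {(0:ℂ)} (fun _ => 2 * chi2 τ) x) ν :=
    (integrable_const _).indicator (measurableSet_singleton 0)
  have hL1 : Integrable (fun x : ℂ => Set.indicator {x : ℂ | x ≠ 0} (fun _ => 1 + τ ^ 2) x) ν :=
    (integrable_const _).indicator hsne
  have hintL : ∫ x, L x ∂ν = (ν {(0:ℂ)}).toReal * (2 * chi2 τ)
      + (ν {x : ℂ | x ≠ 0}).toReal * (1 + τ ^ 2) := by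
    rw [hL]
    rw [integral_add hL0 hL1, integral_indicator (measurableSet_singleton 0),
      integral_indicator hsne, setIntegral_const, setIntegral_const]
    simp [smul_eq_mul]
    rfl
  have hsum : (ν {(0:ℂ)}).toReal = 1 - (ν {x : ℂ | x ≠ 0}).toReal := by
    have hcompl : {x : ℂ | x ≠ 0} = ({(0:ℂ)} : Set ℂ)ᶜ := by ext x; simp
    have h1 : ν {(0:ℂ)} + ν ({(0:ℂ)} : Set ℂ)ᶜ = 1 := by
      rw [measure_add_measure_compl (measurableSet_singleton 0)]
      exact measure_univ
    have h2 : (ν {(0:ℂ)}).toReal + (ν ({(0:ℂ)} : Set ℂ)ᶜ).toReal = 1 := by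
      rw [← ENNReal.toReal_add (measure_ne_top ν _) (measure_ne_top ν _), h1]
      simp
    rw [hcompl]
    linarith
  have hev : (fun m : ℝ => mseMap ν δ 0 τ m / m)
      =ᶠ[l] fun m : ℝ => (∫ x, softRisk (‖x‖ / Real.sqrt (m / δ)) τ ∂ν) / δ := by
    filter_upwards [self_mem_nhdsWithin] with m hm
    have hm0 : (0:ℝ) < m := hm
    unfold mseMap
    rw [show (0:ℝ) ^ 2 + m / δ = m / δ by norm_num]
    field_simp
  refine Tendsto.congr' hev.symm ?_
  convert key.div_const δ using 2
  rw [hintL, hsum]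
end
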